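/- Let p be an odd prime and k an integer with k > 2, and let G be a permutation group of degree n = p + k. If G is (k+1)-transitive, then G contains the alternating group A_n. -/

import Mathlib

open Equiv Subgroup
open MulAction hiding IsMultiplyPretransitive

private lemma exists_snoc_emb {α : Type*} {k : ℕ} {e : Fin k → α}
    (einj : Function.Injective e) {x : α} (hx : ∀ i, e i ≠ x) :
    ∃ y : Fin (k + 1) ↪ α, (∀ i : Fin k, y i.castSucc = e i) ∧ y (Fin.last k) = x := by
  have hinj : Function.Injective (Fin.snoc e x : Fin (k + 1) → α) := by
    intro i j hij
    rcases Fin.eq_castSucc_or_eq_last i with ⟨i', rfl⟩ | rfl <;>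
      rcases Fin.eq_castSucc_or_eq_last j with ⟨j', rfl⟩ | rfl
    · rw [Fin.snoc_castSucc, Fin.snoc_castSucc] at hij
      exact congrArg Fin.castSucc (einj hij)
    · rw [Fin.snoc_castSucc, Fin.snoc_last] at hij
      exact absurd hij (hx i')
    · rw [Fin.snoc_castSucc, Fin.snoc_last] at hij
      exact absurd hij.symm (hx j')
    · rfl
  refine ⟨⟨_, hinj⟩, fun i => ?_, ?_⟩
  · simp only [Function.Embedding.coeFn_mk]
    exact Fin.snoc_castSucc ..
  · simp only [Function.Embedding.coeFn_mk]
    exact Fin.snoc_last ..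

theorem Equiv.Perm.apply_inv_self {α : Type*} (f : Equiv.Perm α) (x : α) : f (f⁻¹ x) = x :=
  Equiv.apply_symm_apply f x

theorem Equiv.Perm.inv_apply_self {α : Type*} (f : Equiv.Perm α) (x : α) : f⁻¹ (f x) = x :=
  Equiv.symm_apply_apply f x

/-- `G` acts `n`-fold pretransitively on `α`: the induced action on embeddings of `Fin n`
into `α` (i.e. on ordered `n`-tuples of distinct elements) is pretransitive. -/
def IsMultiplyPretransitive (G : Type*) (α : Type*) [Group G] [MulAction G α] (n : ℕ) : Prop :=
  MulAction.IsPretransitive G (Fin n ↪ α)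

set_option maxHeartbeats 4000000

/-- **Jordan's Théorème I of [Jor73].** Let `p` be an odd prime and `k > 2`. A permutation
group of degree `n = p + k` which is `(k+1)`-transitive contains the alternating group. -/
theorem jordan_transitivity_bound (Ω : Type*) [Fintype Ω] [DecidableEq Ω]
    (p k : ℕ) (hp : p.Prime) (hodd : Odd p) (hk : 2 < k)
    (hn : Fintype.card Ω = p + k)
    (G : Subgroup (Equiv.Perm Ω))
    (hG : IsMultiplyPretransitive G Ω (k + 1)) :
    alternatingGroup Ω ≤ G := by
  classical
  haveI hfp : Fact p.Prime := ⟨hp⟩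
  have hp3 : 3 ≤ p := by
    have h2 := hp.two_le
    rcases Nat.lt_or_ge p 3 with h | h
    · interval_cases p
      · exact absurd hodd (by decide)
    · exact h
  -- the key transitivity tool
  have key : ∀ x y : Fin (k + 1) ↪ Ω, ∃ g ∈ G, ∀ i, (g : Equiv.Perm Ω) (x i) = y i := by
    intro x y
    obtain ⟨g, hg⟩ := hG.exists_smul_eq x y
    refine ⟨(g : Equiv.Perm Ω), g.2, fun i => ?_⟩
    have := DFunLike.congr_fun hg i
    simpa [Function.Embedding.smul_apply, Subgroup.smul_def, Equiv.Perm.smul_def] using this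
  -- a k-element subset F of Ω
  obtain ⟨F, -, hFcard⟩ := Finset.exists_subset_card_eq
    (s := (Finset.univ : Finset Ω)) (n := k) (by rw [Finset.card_univ, hn]; omega)
  -- an enumeration of F
  have hkc : F.card = k := hFcard
  let eF : Fin k ≃ {x // x ∈ F} := (F.equivFin.trans (finCongr hkc)).symm
  set e : Fin k → Ω := fun i => ((eF i : Ω)) with he
  have einj : Function.Injective e := by
    intro i j h
    exact eF.injective (Subtype.ext h)
  have emem : ∀ i, e i ∈ F := fun i => (eF i).2
  have esurj : ∀ f ∈ F, ∃ i, e i = f := by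
    intro f hf
    exact ⟨eF.symm ⟨f, hf⟩, by simp [he]⟩
  -- a point outside F
  have hcompl_card : Fᶜ.card = p := by
    rw [Finset.card_compl, hkc, hn]; omega
  obtain ⟨s₀, hs₀⟩ : ∃ x, x ∈ Fᶜ := Finset.card_pos.mp (by omega)
  have hs₀F : s₀ ∉ F := Finset.mem_compl.mp hs₀
  -- the pointwise stabilizer of F inside G
  set H : Subgroup (Equiv.Perm Ω) :=
    G ⊓ fixingSubgroup (Equiv.Perm Ω) (↑F : Set Ω) with hHdef
  have memH : ∀ {g : Equiv.Perm Ω}, g ∈ H ↔ g ∈ G ∧ ∀ f ∈ F, g f = f := by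
    intro g
    rw [hHdef, Subgroup.mem_inf, mem_fixingSubgroup_iff]
    simp [Equiv.Perm.smul_def]
  -- permutations mapping F into F
  have himage : ∀ {g : Equiv.Perm Ω}, (∀ f ∈ F, g f ∈ F) → Finset.image (⇑g) F = F := by
    intro g hg
    apply Finset.eq_of_subset_of_card_le
    · intro y hy
      obtain ⟨f, hf, rfl⟩ := Finset.mem_image.mp hy
      exact hg f hf
    · rw [Finset.card_image_of_injective _ g.injective]
  have hpreim : ∀ {g : Equiv.Perm Ω}, (∀ f ∈ F, g f ∈ F) → ∀ y ∈ F, ∃ f ∈ F, g f = y := by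
    intro g hg y hy
    rw [← himage hg] at hy
    obtain ⟨f, hf, hfy⟩ := Finset.mem_image.mp hy
    exact ⟨f, hf, hfy⟩
  have hcomplmap : ∀ {g : Equiv.Perm Ω}, (∀ f ∈ F, g f ∈ F) → ∀ {x}, x ∉ F → g x ∉ F := by
    intro g hg x hx hgx
    obtain ⟨f, hf, hfy⟩ := hpreim hg (g x) hgx
    exact hx ((g.injective hfy) ▸ hf)
  -- H is transitive on the complement of F
  have Htrans : ∀ x, x ∉ F → ∀ y, y ∉ F → ∃ h, h ∈ H ∧ (h : Equiv.Perm Ω) x = y := by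
    intro x hx y hy
    obtain ⟨X, hX1, hX2⟩ := exists_snoc_emb einj (x := x) (fun i h => hx (h ▸ emem i))
    obtain ⟨Y, hY1, hY2⟩ := exists_snoc_emb einj (x := y) (fun i h => hy (h ▸ emem i))
    obtain ⟨g, hgG, hg⟩ := key X Y
    refine ⟨g, memH.mpr ⟨hgG, fun f hf => ?_⟩, ?_⟩
    · obtain ⟨i, rfl⟩ := esurj f hf
      have := hg i.castSucc
      rwa [hX1, hY1] at this
    · have := hg (Fin.last k)
      rwa [hX2, hY2] at this
  -- p divides the order of H
  haveI : Fintype H := Fintype.ofFinite _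
  have horbit : orbit H s₀ = {x : Ω | x ∉ F} := by
    ext x
    constructor
    · rintro ⟨h, rfl⟩
      have hh := (memH.mp h.2).2
      show (h : Equiv.Perm Ω) s₀ ∉ F
      exact hcomplmap (fun f hf => (hh f hf).symm ▸ hf) hs₀F
    · intro hx
      obtain ⟨h, hh, hhx⟩ := Htrans s₀ hs₀F x hx
      exact MulAction.mem_orbit_iff.mpr ⟨⟨h, hh⟩, hhx⟩
  have hpH : p ∣ Fintype.card H := by
    have h1 := MulAction.card_orbit_mul_card_stabilizer_eq_card_group H s₀
    have h2 : Fintype.card (orbit H s₀) = p := by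
      rw [Fintype.card_congr (Equiv.setCongr horbit)]
      have h3 : Fintype.card {x : Ω // x ∉ F} =
          Fintype.card Ω - Fintype.card {x : Ω // x ∈ F} := Fintype.card_subtype_compl _
      have h4 : Fintype.card {x : Ω // x ∈ F} = k := by
        rw [← hkc]; exact Fintype.card_coe F
      calc Fintype.card {x : Ω | x ∉ F} = Fintype.card {x : Ω // x ∉ F} :=
            Fintype.card_congr (Equiv.refl _)
        _ = p := by rw [h3, h4, hn]; omega
    exact ⟨Fintype.card (stabilizer H s₀), by rw [← h1, h2]⟩
  -- Cauchy: an element c of order p fixing F pointwise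
  obtain ⟨ct, hct⟩ := exists_prime_orderOf_dvd_card p hpH
  set c : Equiv.Perm Ω := (ct : Equiv.Perm Ω) with hc
  have hcH : c ∈ H := ct.2
  have hcG : c ∈ G := (memH.mp hcH).1
  have hcF : ∀ f ∈ F, c f = f := (memH.mp hcH).2
  have hcOrd : orderOf c = p :=
    (orderOf_injective H.subtype H.subtype_injective ct).trans hct
  have hcne : c ≠ 1 := by
    intro h
    rw [h, orderOf_one] at hcOrd
    omega
  have hsub : c.support ⊆ Fᶜ := by
    intro x hx
    rw [Finset.mem_compl]
    intro hxF
    exact (Equiv.Perm.mem_support.mp hx) (hcF x hxF)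
  have hctype : c.cycleType = {p} := by
    have hall : ∀ q ∈ c.cycleType, q = p := by
      intro q hq
      have h1 : q ∣ p := by
        rw [← hcOrd, ← Equiv.Perm.lcm_cycleType]
        exact Multiset.dvd_lcm hq
      have h2 := Equiv.Perm.two_le_of_mem_cycleType hq
      rcases (Nat.dvd_prime hp).mp h1 with h | h
      · omega
      · exact h
    have hne : c.cycleType ≠ 0 := by
      simpa [Equiv.Perm.cycleType_eq_zero] using hcne
    have hrep : c.cycleType = Multiset.replicate (Multiset.card c.cycleType) p :=
      Multiset.eq_replicate_card.mpr hall
    have hsum : c.cycleType.sum = c.support.card := Equiv.Perm.sum_cycleType c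
    have hle : c.support.card ≤ p := hcompl_card ▸ Finset.card_le_card hsub
    have hsumrep : c.cycleType.sum = Multiset.card c.cycleType * p := by
      rw [hrep, Multiset.sum_replicate, smul_eq_mul, Multiset.card_replicate]
    have hpos : 0 < Multiset.card c.cycleType := Multiset.card_pos.mpr hne
    have hcard1 : Multiset.card c.cycleType = 1 := by
      by_contra hne1
      have h2le : 2 ≤ Multiset.card c.cycleType := by omega
      have := Nat.mul_le_mul_right p h2le
      omega
    rw [hrep, hcard1]
    rfl
  have hcyc : c.IsCycle := Equiv.Perm.card_cycleType_eq_one.mp (by rw [hctype]; rfl)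
  have hsupport : c.support = Fᶜ := by
    apply Finset.eq_of_subset_of_card_le hsub
    have hsc : c.support.card = p := by
      rw [← Equiv.Perm.sum_cycleType, hctype, Multiset.sum_singleton]
    rw [hcompl_card, hsc]
  have hmove : ∀ x, x ∉ F → c x ≠ x := by
    intro x hx
    have : x ∈ c.support := by
      rw [hsupport]
      exact Finset.mem_compl.mpr hx
    exact Equiv.Perm.mem_support.mp this
  have hsame : ∀ x, x ∉ F → ∀ y, y ∉ F → ∃ i : ℤ, (c ^ i) x = y := by
    intro x hx y hy
    exact hcyc.sameCycle (hmove x hx) (hmove y hy)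
  have hczF : ∀ (m : ℤ), ∀ f ∈ F, ((c ^ m : Equiv.Perm Ω)) f = f := by
    intro m f hf
    have h1 : c ∈ fixingSubgroup (Equiv.Perm Ω) (↑F : Set Ω) :=
      (Subgroup.mem_inf.mp (by rw [← hHdef]; exact hcH)).2
    have h2 := Subgroup.zpow_mem _ h1 m
    have := (mem_fixingSubgroup_iff (Equiv.Perm Ω)).mp h2 f (by exact hf)
    simpa [Equiv.Perm.smul_def] using this
  -- H embeds into the permutations of the complement of F, so its order has p-valuation 1
  have hpred : ∀ (h : H) (x : Ω), x ∉ F ↔ (h : Equiv.Perm Ω) x ∉ F := by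
    intro h x
    have hh := (memH.mp h.2).2
    have hmaps : ∀ f ∈ F, (h : Equiv.Perm Ω) f ∈ F := fun f hf => (hh f hf).symm ▸ hf
    constructor
    · exact fun hx => hcomplmap hmaps hx
    · intro hx
      by_contra hxF
      exact hx ((hh x hxF).symm ▸ hxF)
  let ρ : H →* Equiv.Perm {x : Ω // x ∉ F} :=
    { toFun := fun h => (h : Equiv.Perm Ω).subtypePerm (fun x => (hpred h x).symm)
      map_one' := by
        apply Equiv.ext
        intro x
        apply Subtype.ext
        simp [Equiv.Perm.subtypePerm_apply]
      map_mul' := by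
        intro a b
        apply Equiv.ext
        intro x
        apply Subtype.ext
        rfl }
  have hρinj : Function.Injective ρ := by
    intro a b hab
    apply Subtype.ext
    apply Equiv.ext
    intro x
    by_cases hx : x ∈ F
    · rw [(memH.mp a.2).2 x hx, (memH.mp b.2).2 x hx]
    · have := DFunLike.congr_fun hab ⟨x, hx⟩
      simpa [ρ, Equiv.Perm.subtypePerm_apply, Subtype.ext_iff] using this
  have hsubcard : Fintype.card {x : Ω // x ∉ F} = p := by
    rw [Fintype.card_subtype_compl]
    have h4 : Fintype.card {x : Ω // x ∈ F} = k := by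
      rw [← hkc]
      exact Fintype.card_coe F
    rw [h4, hn]
    omega
  have hdvdfact : Nat.card H ∣ Nat.factorial p := by
    have h1 : Nat.card H = Nat.card ρ.range :=
      Nat.card_congr (MulEquiv.toEquiv (MonoidHom.ofInjective hρinj))
    rw [h1]
    have h2 := Subgroup.card_subgroup_dvd_card ρ.range
    have h3 : Nat.card (Equiv.Perm {x : Ω // x ∉ F}) = Nat.factorial p := by
      rw [Nat.card_eq_fintype_card, Fintype.card_perm, hsubcard]
    rw [h3] at h2
    simpa [Nat.card_eq_fintype_card] using h2
  have hfactor : (Nat.card H).factorization p = 1 := by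
    have hpdvd : p ∣ Nat.card H := by rwa [Nat.card_eq_fintype_card]
    have hcard0 : Nat.card H ≠ 0 := Nat.card_pos.ne'
    have hnot : ¬ (p * p ∣ Nat.card H) := by
      intro hpp
      have h5 : p * p ∣ Nat.factorial p := hpp.trans hdvdfact
      have h6 : Nat.factorial p = p * Nat.factorial (p - 1) := by
        conv_lhs => rw [show p = (p - 1) + 1 by omega]
        rw [Nat.factorial_succ]
        congr 2
        omega
      rw [h6] at h5
      have h7 : p ∣ Nat.factorial (p - 1) :=
        (mul_dvd_mul_iff_left (show (p : ℕ) ≠ 0 by omega)).mp h5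
      have h8 := (Nat.Prime.dvd_factorial hp).mp h7
      omega
    have hle : (Nat.card H).factorization p ≤ 1 := by
      by_contra hgt
      have h2le : 2 ≤ (Nat.card H).factorization p := by omega
      have := (Nat.Prime.pow_dvd_iff_le_factorization hp hcard0).mpr h2le
      rw [pow_two] at this
      exact hnot this
    have hge : 1 ≤ (Nat.card H).factorization p :=
      (Nat.Prime.pow_dvd_iff_le_factorization hp hcard0).mp (by rwa [pow_one])
    omega
  -- Sylow conjugacy inside H
  haveI : Finite (Sylow p H) := by
    haveI : Finite (Subgroup H) :=
      Finite.of_injective (fun K : Subgroup H => (K : Set H)) SetLike.coe_injective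
    exact Finite.of_injective (fun P : Sylow p H => (P : Subgroup H))
      (fun P Q h => Sylow.ext h)
  have sylowConj : ∀ d : Equiv.Perm Ω, d ∈ H → orderOf d = p →
      ∃ h, h ∈ H ∧ h * d * h⁻¹ ∈ Subgroup.zpowers c := by
    intro d hdH hdp
    set dt : H := ⟨d, hdH⟩ with hdt
    have hdt_ord : orderOf dt = p := by
      rw [← orderOf_injective H.subtype H.subtype_injective dt]
      exact hdp
    have hQd : Nat.card (zpowers dt) = p ^ 1 := by
      rw [Nat.card_zpowers, hdt_ord, pow_one]
    obtain ⟨P, hP⟩ := (IsPGroup.of_card hQd).exists_le_sylow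
    have hPcard : Nat.card P = p := by
      rw [Sylow.card_eq_multiplicity, hfactor, pow_one]
    have hPeq : zpowers dt = (P : Subgroup H) :=
      Subgroup.eq_of_le_of_card_ge hP (by rw [hPcard, Nat.card_zpowers, hdt_ord])
    have hQc : Nat.card (zpowers ct) = p ^ 1 := by
      rw [Nat.card_zpowers, hct, pow_one]
    obtain ⟨Q, hQ⟩ := (IsPGroup.of_card hQc).exists_le_sylow
    have hQcard : Nat.card Q = p := by
      rw [Sylow.card_eq_multiplicity, hfactor, pow_one]
    have hQeq : zpowers ct = (Q : Subgroup H) :=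
      Subgroup.eq_of_le_of_card_ge hQ (by rw [hQcard, Nat.card_zpowers, hct])
    obtain ⟨ht, hsmul⟩ := MulAction.exists_smul_eq H P Q
    have hd_in : ht * dt * ht⁻¹ ∈ (Q : Subgroup H) := by
      rw [← hsmul, Sylow.coe_subgroup_smul]
      refine (Subgroup.mem_smul_pointwise_iff_exists _ _ _).mpr ⟨dt, hPeq ▸ mem_zpowers dt, ?_⟩
      simp [MulAut.smul_def, MulAut.conj_apply]
    rw [← hQeq] at hd_in
    obtain ⟨m, hm⟩ := mem_zpowers_iff.mp hd_in
    refine ⟨(ht : Equiv.Perm Ω), ht.2, mem_zpowers_iff.mpr ⟨m, ?_⟩⟩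
    have := congrArg (fun z : H => (z : Equiv.Perm Ω)) hm
    simpa using this
  -- Witt's lemma : any permutation of F is realized by an element of G normalizing ⟨c⟩
  have witt : ∀ w : Equiv.Perm Ω, (∀ f ∈ F, w f ∈ F) →
      ∃ a : Equiv.Perm Ω, a ∈ G ∧ (∀ f ∈ F, a f = w f) ∧ a * c * a⁻¹ ∈ zpowers c := by
    intro w hw
    have hwe_inj : Function.Injective (fun i => w (e i)) :=
      fun i j h => einj (w.injective h)
    obtain ⟨X, hX1, hX2⟩ := exists_snoc_emb einj (x := s₀) (fun i h => hs₀F (h ▸ emem i))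
    obtain ⟨Y, hY1, hY2⟩ := exists_snoc_emb hwe_inj (x := s₀)
      (fun i h => hs₀F (h ▸ hw (e i) (emem i)))
    obtain ⟨g, hgG, hg⟩ := key X Y
    have hgF : ∀ f ∈ F, g f = w f := by
      intro f hf
      obtain ⟨i, rfl⟩ := esurj f hf
      have := hg i.castSucc
      rwa [hX1, hY1] at this
    have hgmaps : ∀ f ∈ F, g f ∈ F := fun f hf => (hgF f hf).symm ▸ hw f hf
    set d := g * c * g⁻¹ with hd
    have hdH : d ∈ H := by
      rw [memH]
      refine ⟨mul_mem (mul_mem hgG hcG) (inv_mem hgG), ?_⟩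
      intro y hy
      obtain ⟨f, hf, hfy⟩ := hpreim hgmaps y hy
      have hginv : g⁻¹ y = f := by
        rw [← hfy]
        exact Equiv.Perm.inv_apply_self g f
      show (g * c * g⁻¹) y = y
      rw [Equiv.Perm.mul_apply, Equiv.Perm.mul_apply, hginv, hcF f hf, hfy]
    have hdord : orderOf d = p := by
      have hconj : d = (MulAut.conj g) c := by
        simp [hd, MulAut.conj_apply]
      rw [hconj, MulEquiv.orderOf_eq]
      exact hcOrd
    obtain ⟨h, hhH, hconj⟩ := sylowConj d hdH hdord
    refine ⟨h * g, mul_mem ((memH.mp hhH).1) hgG, ?_, ?_⟩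
    · intro f hf
      rw [Equiv.Perm.mul_apply, hgF f hf, (memH.mp hhH).2 (w f) (hw f hf)]
    · have hrw : (h * g) * c * (h * g)⁻¹ = h * d * h⁻¹ := by
        rw [hd]
        group
      rw [hrw]
      exact hconj
  -- conjugation by inverses also stays in zpowers c
  have convInv : ∀ x : Equiv.Perm Ω, x * c * x⁻¹ ∈ zpowers c → x⁻¹ * c * x ∈ zpowers c := by
    intro x hx
    set w := x * c * x⁻¹ with hw
    have hwo : orderOf w = p := by
      have hconj : w = (MulAut.conj x) c := by simp [hw, MulAut.conj_apply]
      rw [hconj, MulEquiv.orderOf_eq]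
      exact hcOrd
    have hle : zpowers w ≤ zpowers c := zpowers_le.mpr hx
    have heq : zpowers w = zpowers c :=
      Subgroup.eq_of_le_of_card_ge hle
        (by rw [Nat.card_zpowers, Nat.card_zpowers, hwo, hcOrd])
    have hcmem : c ∈ zpowers w := heq ▸ mem_zpowers c
    obtain ⟨m, hm⟩ := mem_zpowers_iff.mp hcmem
    refine mem_zpowers_iff.mpr ⟨m, ?_⟩
    have h1 : x⁻¹ * w * x = c := by rw [hw]; group
    have h2 : (x⁻¹ * w * x) ^ m = x⁻¹ * w ^ m * x := by
      have h3 := conj_zpow (i := m) (a := x⁻¹) (b := w)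
      simpa [inv_inv] using h3
    calc c ^ m = (x⁻¹ * w * x) ^ m := by rw [h1]
      _ = x⁻¹ * w ^ m * x := h2
      _ = x⁻¹ * c * x := by rw [hm]
  -- three distinct points of F
  have hk0 : 0 < k := by omega
  have hk1 : 1 < k := by omega
  have hk2 : 2 < k := by omega
  set f₁ := e ⟨0, hk0⟩ with hf₁
  set f₂ := e ⟨1, hk1⟩ with hf₂
  set f₃ := e ⟨2, hk2⟩ with hf₃
  have hm₁ : f₁ ∈ F := emem _
  have hm₂ : f₂ ∈ F := emem _
  have hm₃ : f₃ ∈ F := emem _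
  have hne₁₂ : f₁ ≠ f₂ := by
    intro h
    have := einj h
    simp [Fin.ext_iff] at this
  have hne₁₃ : f₁ ≠ f₃ := by
    intro h
    have := einj h
    simp [Fin.ext_iff] at this
  have hne₂₃ : f₂ ≠ f₃ := by
    intro h
    have := einj h
    simp [Fin.ext_iff] at this
  set α : Equiv.Perm Ω := Equiv.swap f₁ f₂ with hα
  set β : Equiv.Perm Ω := Equiv.swap f₂ f₃ with hβ
  have hαmaps : ∀ f ∈ F, α f ∈ F := by
    intro f hf
    by_cases h1 : f = f₁
    · rw [h1, hα, Equiv.swap_apply_left]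
      exact hm₂
    by_cases h2 : f = f₂
    · rw [h2, hα, Equiv.swap_apply_right]
      exact hm₁
    · rw [hα, Equiv.swap_apply_of_ne_of_ne h1 h2]
      exact hf
  have hβmaps : ∀ f ∈ F, β f ∈ F := by
    intro f hf
    by_cases h1 : f = f₂
    · rw [h1, hβ, Equiv.swap_apply_left]
      exact hm₃
    by_cases h2 : f = f₃
    · rw [h2, hβ, Equiv.swap_apply_right]
      exact hm₂
    · rw [hβ, Equiv.swap_apply_of_ne_of_ne h1 h2]
      exact hf
  obtain ⟨a, haG, haF, haconj⟩ := witt α hαmaps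
  obtain ⟨b, hbG, hbF, hbconj⟩ := witt β hβmaps
  -- inverses act correctly on F
  have hainvF : ∀ f ∈ F, a⁻¹ f = α f := by
    intro f hf
    have h1 : a (α f) = f := by
      rw [haF (α f) (hαmaps f hf), hα, Equiv.swap_apply_self]
    apply a.injective
    rw [Equiv.Perm.apply_inv_self, h1]
  have hbinvF : ∀ f ∈ F, b⁻¹ f = β f := by
    intro f hf
    have h1 : b (β f) = f := by
      rw [hbF (β f) (hβmaps f hf), hβ, Equiv.swap_apply_self]
    apply b.injective
    rw [Equiv.Perm.apply_inv_self, h1]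
  have hamapsF : ∀ f ∈ F, a f ∈ F := fun f hf => (haF f hf).symm ▸ hαmaps f hf
  have hbmapsF : ∀ f ∈ F, b f ∈ F := fun f hf => (hbF f hf).symm ▸ hβmaps f hf
  have hacompl : ∀ x, x ∉ F → a x ∉ F := fun x hx => hcomplmap hamapsF hx
  have hbcompl : ∀ x, x ∉ F → b x ∉ F := fun x hx => hcomplmap hbmapsF hx
  have hainvcompl : ∀ x, x ∉ F → a⁻¹ x ∉ F := by
    intro x hx h
    have h2 := hamapsF _ h
    rw [Equiv.Perm.apply_inv_self] at h2
    exact hx h2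
  have hbinvcompl : ∀ x, x ∉ F → b⁻¹ x ∉ F := by
    intro x hx h
    have h2 := hbmapsF _ h
    rw [Equiv.Perm.apply_inv_self] at h2
    exact hx h2
  set u : Equiv.Perm Ω := a * b * a⁻¹ * b⁻¹ with hu
  have huG : u ∈ G := mul_mem (mul_mem (mul_mem haG hbG) (inv_mem haG)) (inv_mem hbG)
  -- u centralizes c
  obtain ⟨s, hs⟩ := mem_zpowers_iff.mp haconj
  obtain ⟨s', hs'⟩ := mem_zpowers_iff.mp (convInv a haconj)
  obtain ⟨t, ht⟩ := mem_zpowers_iff.mp hbconj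
  obtain ⟨t', ht'⟩ := mem_zpowers_iff.mp (convInv b hbconj)
  have hss' : c ^ (s * s') = c := by
    rw [zpow_mul, hs, conj_zpow, hs']
    group
  have htt' : c ^ (t * t') = c := by
    rw [zpow_mul, ht, conj_zpow, ht']
    group
  have hucu : u * c * u⁻¹ = c := by
    have e1 : b⁻¹ * c * b = c ^ t' := ht'.symm
    have e2 : a⁻¹ * c ^ t' * a = c ^ (s' * t') := by
      have h3 := conj_zpow (i := t') (a := a⁻¹) (b := c)
      rw [inv_inv] at h3
      rw [← h3, ← hs', ← zpow_mul]
    have e3 : b * c ^ (s' * t') * b⁻¹ = c ^ (t * (s' * t')) := by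
      rw [← conj_zpow, ← ht, ← zpow_mul]
    have e4 : a * c ^ (t * (s' * t')) * a⁻¹ = c ^ (s * (t * (s' * t'))) := by
      rw [← conj_zpow, ← hs, ← zpow_mul]
    have e5 : u * c * u⁻¹ = a * (b * (a⁻¹ * (b⁻¹ * c * b) * a) * b⁻¹) * a⁻¹ := by
      rw [hu]
      group
    have e6 : s * (t * (s' * t')) = (s * s') * (t * t') := by ring
    rw [e5, e1, e2, e3, e4, e6, zpow_mul, hss', htt']
  have hcomm : c * u = u * c := by
    have h1 := congrArg (fun z => z * u) hucu
    simpa [mul_assoc] using h1.symm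
  -- the action of u on F is the commutator of the two swaps
  have huF : ∀ f ∈ F, u f = α (β (α (β f))) := by
    intro f hf
    have h1 : u f = a (b (a⁻¹ (b⁻¹ f))) := by
      rw [hu]
      simp [Equiv.Perm.mul_apply]
    rw [h1, hbinvF f hf, hainvF _ (hβmaps f hf), hbF _ (hαmaps _ (hβmaps f hf)),
      haF _ (hβmaps _ (hαmaps _ (hβmaps f hf)))]
  have hucompl : ∀ x, x ∉ F → u x ∉ F := by
    intro x hx
    have h1 : u x = a (b (a⁻¹ (b⁻¹ x))) := by
      rw [hu]
      simp [Equiv.Perm.mul_apply]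
    rw [h1]
    exact hacompl _ (hbcompl _ (hainvcompl _ (hbinvcompl _ hx)))
  -- on the complement of F, u agrees with a power of c
  obtain ⟨i, hi⟩ := hsame s₀ hs₀F (u s₀) (hucompl s₀ hs₀F)
  have hux : ∀ x, x ∉ F → u x = (c ^ i) x := by
    intro x hx
    obtain ⟨j, hj⟩ := hsame s₀ hs₀F x hx
    have hcommC : Commute c u := hcomm
    have hzc : u * c ^ j = c ^ j * u := ((hcommC.zpow_left j).eq).symm
    calc u x = u ((c ^ j) s₀) := by rw [hj]
      _ = (u * c ^ j) s₀ := (Equiv.Perm.mul_apply _ _ _).symm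
      _ = (c ^ j * u) s₀ := by rw [hzc]
      _ = (c ^ j) (u s₀) := Equiv.Perm.mul_apply _ _ _
      _ = (c ^ j) ((c ^ i) s₀) := by rw [hi]
      _ = (c ^ j * c ^ i) s₀ := (Equiv.Perm.mul_apply _ _ _).symm
      _ = (c ^ i * c ^ j) s₀ := by rw [← zpow_add, ← zpow_add, add_comm]
      _ = (c ^ i) ((c ^ j) s₀) := Equiv.Perm.mul_apply _ _ _
      _ = (c ^ i) x := by rw [hj]
  -- the commutator of the two swaps as an explicit permutation
  set τ : Equiv.Perm Ω := α * β * α * β with hτ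
  have hτapp : ∀ z, τ z = α (β (α (β z))) := by
    intro z
    rw [hτ]
    simp [Equiv.Perm.mul_apply]
  have hτfix : ∀ z, z ≠ f₁ → z ≠ f₂ → z ≠ f₃ → τ z = z := by
    intro z h1 h2 h3
    rw [hτapp, hβ, hα, Equiv.swap_apply_of_ne_of_ne h2 h3, Equiv.swap_apply_of_ne_of_ne h1 h2,
      Equiv.swap_apply_of_ne_of_ne h2 h3, Equiv.swap_apply_of_ne_of_ne h1 h2]
  have hτmaps : ∀ f ∈ F, τ f ∈ F := by
    intro f hf
    rw [hτapp]
    exact hαmaps _ (hβmaps _ (hαmaps _ (hβmaps f hf)))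
  -- τ is an element of G
  have hτG : τ ∈ G := by
    have hveq : (c ^ (-i) * u : Equiv.Perm Ω) = τ := by
      apply Equiv.ext
      intro x
      by_cases hx : x ∈ F
      · have h1 : u x = τ x := by rw [huF x hx, hτapp]
        rw [Equiv.Perm.mul_apply, h1]
        exact hczF (-i) (τ x) (hτmaps x hx)
      · rw [Equiv.Perm.mul_apply, hux x hx]
        have h2 : (c ^ (-i)) ((c ^ i) x) = x := by
          rw [← Equiv.Perm.mul_apply, ← zpow_add, neg_add_cancel, zpow_zero,
            Equiv.Perm.one_apply]
        rw [h2, hτfix x (fun h => hx (h ▸ hm₁)) (fun h => hx (h ▸ hm₂))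
          (fun h => hx (h ▸ hm₃))]
    rw [← hveq]
    exact mul_mem (Subgroup.zpow_mem G hcG (-i)) huG
  -- τ is a three-cycle
  have hτ3 : Equiv.Perm.IsThreeCycle τ := by
    have h1 : τ = (α * β) * (α * β) := by
      rw [hτ]
      group
    have h2 : Equiv.Perm.IsThreeCycle (α * β) := by
      have h3 : α * β = Equiv.swap f₂ f₁ * Equiv.swap f₂ f₃ := by
        rw [hα, hβ, Equiv.swap_comm f₂ f₁]
      rw [h3]
      exact Equiv.Perm.isThreeCycle_swap_mul_swap_same hne₁₂.symm hne₂₃ hne₁₃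
    rw [h1]
    exact h2.isThreeCycle_sq
  -- values of τ on the three points
  have hτf₁ : τ f₁ = f₃ := by
    rw [hτapp, hβ, hα, Equiv.swap_apply_of_ne_of_ne hne₁₂ hne₁₃, Equiv.swap_apply_left,
      Equiv.swap_apply_left, Equiv.swap_apply_of_ne_of_ne hne₁₃.symm hne₂₃.symm]
  have hτf₂ : τ f₂ = f₁ := by
    rw [hτapp, hβ, hα, Equiv.swap_apply_left,
      Equiv.swap_apply_of_ne_of_ne hne₁₃.symm hne₂₃.symm, Equiv.swap_apply_right,
      Equiv.swap_apply_right]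
  have hτf₃ : τ f₃ = f₂ := by
    rw [hτapp, hβ, hα, Equiv.swap_apply_right, Equiv.swap_apply_right,
      Equiv.swap_apply_of_ne_of_ne hne₁₂ hne₁₃, Equiv.swap_apply_left]
  -- conclusion: every three-cycle lies in G
  rw [← Equiv.Perm.closure_three_cycles_eq_alternating, Subgroup.closure_le]
  rintro σ hσ
  simp only [Set.mem_setOf_eq] at hσ
  have hconj : IsConj τ σ := Equiv.Perm.isConj_of_cycleType_eq (Eq.trans hτ3 hσ.symm)
  obtain ⟨π, hπ⟩ := isConj_iff.mp hconj
  obtain ⟨X, hX1, hX2⟩ := exists_snoc_emb einj (x := s₀) (fun i h => hs₀F (h ▸ emem i))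
  obtain ⟨g, hgG, hg⟩ := key X (X.trans π.toEmbedding)
  have hg' : ∀ i : Fin k, g (e i) = π (e i) := by
    intro i
    have h0 := hg i.castSucc
    rw [hX1] at h0
    have h1 : (X.trans π.toEmbedding) i.castSucc = π (X i.castSucc) := rfl
    rw [h1, hX1] at h0
    exact h0
  have hg₁ : g f₁ = π f₁ := by
    rw [hf₁]
    exact hg' _
  have hg₂ : g f₂ = π f₂ := by
    rw [hf₂]
    exact hg' _
  have hg₃ : g f₃ = π f₃ := by
    rw [hf₃]
    exact hg' _
  have hgτ : g * τ * g⁻¹ = σ := by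
    rw [← hπ]
    apply Equiv.ext
    intro x
    simp only [Equiv.Perm.mul_apply]
    by_cases h₁ : g⁻¹ x = f₁
    · have hx1 : x = g f₁ := by rw [← h₁, Equiv.Perm.apply_inv_self]
      have hπ1 : π⁻¹ x = f₁ := by rw [hx1, hg₁, Equiv.Perm.inv_apply_self]
      rw [h₁, hπ1, hτf₁, hg₃]
    by_cases h₂ : g⁻¹ x = f₂
    · have hx2 : x = g f₂ := by rw [← h₂, Equiv.Perm.apply_inv_self]
      have hπ2 : π⁻¹ x = f₂ := by rw [hx2, hg₂, Equiv.Perm.inv_apply_self]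
      rw [h₂, hπ2, hτf₂, hg₁]
    by_cases h₃ : g⁻¹ x = f₃
    · have hx3 : x = g f₃ := by rw [← h₃, Equiv.Perm.apply_inv_self]
      have hπ3 : π⁻¹ x = f₃ := by rw [hx3, hg₃, Equiv.Perm.inv_apply_self]
      rw [h₃, hπ3, hτf₃, hg₂]
    · have hπ₁ : π⁻¹ x ≠ f₁ := by
        intro h
        have : x = π f₁ := by rw [← h, Equiv.Perm.apply_inv_self]
        exact h₁ (by rw [this, ← hg₁, Equiv.Perm.inv_apply_self])
      have hπ₂ : π⁻¹ x ≠ f₂ := by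
        intro h
        have : x = π f₂ := by rw [← h, Equiv.Perm.apply_inv_self]
        exact h₂ (by rw [this, ← hg₂, Equiv.Perm.inv_apply_self])
      have hπ₃ : π⁻¹ x ≠ f₃ := by
        intro h
        have : x = π f₃ := by rw [← h, Equiv.Perm.apply_inv_self]
        exact h₃ (by rw [this, ← hg₃, Equiv.Perm.inv_apply_self])
      rw [hτfix _ h₁ h₂ h₃, hτfix _ hπ₁ hπ₂ hπ₃, Equiv.Perm.apply_inv_self,
        Equiv.Perm.apply_inv_self]
  rw [← hgτ]
  exact mul_mem (mul_mem hgG hτG) (inv_mem hgG)
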